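/- Let d, m, n be positive natural numbers and let A be an m×n row-stochastic real matrix with a quantum implementation in dimension d given by states ρ_1,…,ρ_m and POVM effects M_1,…,M_n, and suppose λmax(A) = d. Then for every j with M_j ≠ 0 there exists an index i such that ρ_i is a rank-one orthogonal projection (ρ_i² = ρ_i and ρ_i is Hermitian of rank 1) and M_j = (tr M_j) · ρ_i; in particular the state ensemble contains the pure eigenstate of each nonzero effect. -/

import Mathlib

open Matrix BigOperators
open scoped ComplexOrder

/-- A real matrix is row-stochastic if all entries are nonnegative
and each row sums to 1. -/
def RowStochastic {m n : ℕ} (A : Matrix (Fin m) (Fin n) ℝ) : Prop :=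
  (∀ i j, 0 ≤ A i j) ∧ ∀ i, ∑ j, A i j = 1

/-- `A` admits a quantum implementation in dimension `d`: there are states
`ρ i` (PSD, trace one) and POVM effects `M j` (PSD, summing to the identity)
with `A i j = Re (tr (ρ i * M j))`. -/
def QuantumImpl (d m n : ℕ) (A : Matrix (Fin m) (Fin n) ℝ) : Prop :=
  ∃ (ρ : Fin m → Matrix (Fin d) (Fin d) ℂ) (M : Fin n → Matrix (Fin d) (Fin d) ℂ),
    (∀ i, (ρ i).PosSemidef ∧ (ρ i).trace = 1) ∧
    (∀ j, (M j).PosSemidef) ∧ (∑ j, M j = 1) ∧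
    (∀ i j, A i j = ((ρ i * M j).trace).re)

/-- The max monotone `λmax(A) = Σ_j max_i A i j`. -/
noncomputable def lmax {m n : ℕ} (A : Matrix (Fin m) (Fin n) ℝ) : ℝ :=
  ∑ j, ⨆ i, A i j

/-- The min monotone `λmin(A) = −Σ_j min_i A i j`. -/
noncomputable def lmin {m n : ℕ} (A : Matrix (Fin m) (Fin n) ℝ) : ℝ :=
  - ∑ j, ⨅ i, A i j

/-- `UWMaj B A` : `B` is ultraweakly majorized by `A` (i.e. `B ⪯ A`),
meaning `B = L * A * R` for some row-stochastic `L`, `R`. -/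
def UWMaj {m' n' m n : ℕ} (B : Matrix (Fin m') (Fin n') ℝ)
    (A : Matrix (Fin m) (Fin n) ℝ) : Prop :=
  ∃ (L : Matrix (Fin m') (Fin m) ℝ) (R : Matrix (Fin n) (Fin n') ℝ),
    RowStochastic L ∧ RowStochastic R ∧ L * A * R = B

section Helpers

variable {k : ℕ}

lemma trace_im_of_herm {P : Matrix (Fin k) (Fin k) ℂ} (hP : P.IsHermitian) :
    P.trace.im = 0 := by
  have : ∀ i, (P i i).im = 0 := fun i => by
    have := hP.apply i i
    have h2 := congrArg Complex.im this
    simp [Complex.star_def] at h2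
    linarith
  simp [Matrix.trace, Matrix.diag, Complex.im_sum, this]

lemma trace_ctms_re (B : Matrix (Fin k) (Fin k) ℂ) :
    ((Bᴴ * B).trace).re = ∑ j, ∑ i, Complex.normSq (B i j) := by
  simp [Matrix.trace, Matrix.diag, Matrix.mul_apply, Matrix.conjTranspose_apply,
    Complex.re_sum, Complex.star_def, Complex.normSq_eq_conj_mul_self, Complex.normSq_apply]

lemma eq_zero_of_trace_ctms (B : Matrix (Fin k) (Fin k) ℂ)
    (h : ((Bᴴ * B).trace).re = 0) : B = 0 := by
  rw [trace_ctms_re] at h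
  have := (Finset.sum_eq_zero_iff_of_nonneg (fun j _ => Finset.sum_nonneg
    (fun i _ => Complex.normSq_nonneg (B i j)))).mp h
  ext i j
  have h2 := (Finset.sum_eq_zero_iff_of_nonneg
    (fun i _ => Complex.normSq_nonneg (B i j))).mp (this j (Finset.mem_univ j)) i (Finset.mem_univ i)
  simpa [Complex.normSq_eq_zero] using h2

lemma psd_ctms {P : Matrix (Fin k) (Fin k) ℂ} (hP : P.PosSemidef) :
    ∃ B : Matrix (Fin k) (Fin k) ℂ, P = Bᴴ * B := by
  open scoped MatrixOrder in
  exact CStarAlgebra.nonneg_iff_eq_star_mul_self.mp hP.nonneg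

lemma trace_mul_psd_re_nonneg {P N : Matrix (Fin k) (Fin k) ℂ}
    (hP : P.PosSemidef) (hN : N.PosSemidef) : 0 ≤ ((P * N).trace).re := by
  obtain ⟨B, rfl⟩ := psd_ctms hN
  obtain ⟨C, rfl⟩ := psd_ctms hP
  have : (Cᴴ * C * (Bᴴ * B)).trace = (((C * Bᴴ)ᴴ) * (C * Bᴴ)).trace := by
    have e : (C * Bᴴ)ᴴ = B * Cᴴ := by simp [Matrix.conjTranspose_mul]
    rw [e, show Cᴴ * C * (Bᴴ * B) = Cᴴ * (C * Bᴴ * B) by noncomm_ring,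
      Matrix.trace_mul_comm,
      show C * Bᴴ * B * Cᴴ = C * Bᴴ * (B * Cᴴ) by noncomm_ring, Matrix.trace_mul_comm]
  rw [this, trace_ctms_re]
  exact Finset.sum_nonneg fun j _ => Finset.sum_nonneg fun i _ => Complex.normSq_nonneg _

lemma mul_eq_zero_of_trace_re {P N : Matrix (Fin k) (Fin k) ℂ}
    (hP : P.PosSemidef) (hN : N.PosSemidef) (h : ((P * N).trace).re = 0) : P * N = 0 := by
  obtain ⟨B, rfl⟩ := psd_ctms hN
  obtain ⟨C, rfl⟩ := psd_ctms hP
  have htr : (Cᴴ * C * (Bᴴ * B)).trace = (((C * Bᴴ)ᴴ) * (C * Bᴴ)).trace := by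
    have e : (C * Bᴴ)ᴴ = B * Cᴴ := by simp [Matrix.conjTranspose_mul]
    rw [e, show Cᴴ * C * (Bᴴ * B) = Cᴴ * (C * Bᴴ * B) by noncomm_ring,
      Matrix.trace_mul_comm,
      show C * Bᴴ * B * Cᴴ = C * Bᴴ * (B * Cᴴ) by noncomm_ring, Matrix.trace_mul_comm]
  rw [htr] at h
  have hCB : C * Bᴴ = 0 := eq_zero_of_trace_ctms _ h
  have : Cᴴ * C * (Bᴴ * B) = Cᴴ * (C * Bᴴ) * B := by noncomm_ring
  rw [this, hCB, Matrix.mul_zero, Matrix.zero_mul]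

lemma star_dot_self (y : Fin k → ℂ) :
    star y ⬝ᵥ y = ((∑ l, Complex.normSq (y l) : ℝ) : ℂ) := by
  push_cast
  simp [dotProduct, Pi.star_apply, Complex.normSq_eq_conj_mul_self]

lemma one_sub_posSemidef {P : Matrix (Fin k) (Fin k) ℂ}
    (hP : P.PosSemidef) (htr : P.trace = 1) : (1 - P).PosSemidef := by
  refine Matrix.PosSemidef.of_dotProduct_mulVec_nonneg ?_ ?_
  · exact Matrix.isHermitian_one.sub hP.isHermitian
  intro x
  obtain ⟨B, rfl⟩ := psd_ctms hP
  have hq : star x ⬝ᵥ ((Bᴴ * B) *ᵥ x) = star (B *ᵥ x) ⬝ᵥ (B *ᵥ x) := by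
    rw [← Matrix.mulVec_mulVec, Matrix.dotProduct_mulVec, Matrix.vecMul_conjTranspose, star_star]
  have key : ∑ l, Complex.normSq ((B *ᵥ x) l) ≤ ∑ l, Complex.normSq (x l) := by
    have htrB : ∑ l, ∑ i, Complex.normSq (B l i) = 1 := by
      have h1 := trace_ctms_re B
      rw [htr] at h1
      simp only [Complex.one_re] at h1
      rw [Finset.sum_comm]; exact h1.symm
    calc ∑ l, Complex.normSq ((B *ᵥ x) l)
        ≤ ∑ l, (∑ i, Complex.normSq (B l i)) * (∑ i, Complex.normSq (x i)) := by
          apply Finset.sum_le_sum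
          intro l _
          have h1 : ‖(B *ᵥ x) l‖ ≤ ∑ i, ‖B l i‖ * ‖x i‖ := by
            simpa [Matrix.mulVec, dotProduct, norm_mul] using
              (norm_sum_le Finset.univ (fun i => B l i * x i))
          have h2 : (∑ i, ‖B l i‖ * ‖x i‖) ^ 2 ≤
              (∑ i, ‖B l i‖ ^ 2) * (∑ i, ‖x i‖ ^ 2) :=
            Finset.sum_mul_sq_le_sq_mul_sq _ _ _
          have h3 : Complex.normSq ((B *ᵥ x) l) = ‖(B *ᵥ x) l‖ ^ 2 :=
            (Complex.sq_norm _).symm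
          rw [h3]
          calc ‖(B *ᵥ x) l‖ ^ 2
              ≤ (∑ i, ‖B l i‖ * ‖x i‖) ^ 2 := by
                apply pow_le_pow_left₀ (norm_nonneg _) h1
            _ ≤ (∑ i, ‖B l i‖ ^ 2) * (∑ i, ‖x i‖ ^ 2) := h2
            _ = (∑ i, Complex.normSq (B l i)) * (∑ i, Complex.normSq (x i)) := by
                simp [Complex.sq_norm]
      _ = (∑ l, ∑ i, Complex.normSq (B l i)) * (∑ i, Complex.normSq (x i)) := by
          rw [Finset.sum_mul]
      _ = ∑ l, Complex.normSq (x l) := by rw [htrB, one_mul]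
  have hz : star x ⬝ᵥ ((1 - Bᴴ * B) *ᵥ x)
      = ((∑ l, Complex.normSq (x l) : ℝ) : ℂ) - ((∑ l, Complex.normSq ((B *ᵥ x) l) : ℝ) : ℂ) := by
    rw [Matrix.sub_mulVec, dotProduct_sub, Matrix.one_mulVec, hq,
      star_dot_self, star_dot_self]
  rw [hz, ← Complex.ofReal_sub]
  rw [Complex.zero_le_real]
  linarith

lemma vecMulVec_mulVec' (v w x : Fin k → ℂ) :
    vecMulVec v w *ᵥ x = (w ⬝ᵥ x) • v := by
  ext i
  simp only [Matrix.mulVec, Matrix.vecMulVec_apply, dotProduct, Pi.smul_apply, smul_eq_mul,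
    Finset.sum_mul]
  exact Finset.sum_congr rfl fun j _ => by ring

lemma vecMulVec_mul_mat (u w : Fin k → ℂ) (N : Matrix (Fin k) (Fin k) ℂ) :
    vecMulVec u w * N = vecMulVec u (w ᵥ* N) := by
  ext i j
  simp only [Matrix.mul_apply, Matrix.vecMulVec_apply, Matrix.vecMul, dotProduct, Finset.mul_sum]
  exact Finset.sum_congr rfl fun l _ => by ring

lemma vecMulVec_mul_vecMulVec (u w v x : Fin k → ℂ) :
    vecMulVec u w * vecMulVec v x = (w ⬝ᵥ v) • vecMulVec u x := by
  ext i j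
  simp only [Matrix.mul_apply, Matrix.vecMulVec_apply, Matrix.smul_apply, dotProduct,
    smul_eq_mul, Finset.sum_mul]
  exact Finset.sum_congr rfl fun l _ => by ring

lemma vecMulVec_trace (u w : Fin k → ℂ) : (vecMulVec u w).trace = w ⬝ᵥ u := by
  simp only [Matrix.trace, Matrix.diag, Matrix.vecMulVec_apply, dotProduct]
  exact Finset.sum_congr rfl fun l _ => by ring

lemma vecMulVec_star_herm (v : Fin k → ℂ) : (vecMulVec v (star v)).IsHermitian := by
  apply Matrix.IsHermitian.ext
  intro i j
  simp [Matrix.vecMulVec_apply, Complex.star_def, mul_comm]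

lemma pure_state {P : Matrix (Fin k) (Fin k) ℂ} (hP : P.PosSemidef) (htr : P.trace = 1)
    (v : Fin k → ℂ) (hv : v ≠ 0) (heig : P *ᵥ v = v) :
    P = (((∑ l, Complex.normSq (v l) : ℝ)⁻¹ : ℝ) : ℂ) • vecMulVec v (star v) := by
  set γ : ℝ := ∑ l, Complex.normSq (v l) with hγdef
  have hγpos : 0 < γ := by
    obtain ⟨i, hi⟩ : ∃ i, v i ≠ 0 := by
      by_contra h
      push_neg at h
      exact hv (funext h)
    exact Finset.sum_pos' (fun l _ => Complex.normSq_nonneg _)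
      ⟨i, Finset.mem_univ i, Complex.normSq_pos.mpr hi⟩
  have hγ0 : (γ : ℂ) ≠ 0 := by exact_mod_cast hγpos.ne'
  set R : Matrix (Fin k) (Fin k) ℂ := P - ((γ⁻¹ : ℝ) : ℂ) • vecMulVec v (star v) with hR
  have hRherm : R.IsHermitian := by
    apply Matrix.IsHermitian.sub hP.isHermitian
    have h1 := vecMulVec_star_herm v
    unfold Matrix.IsHermitian at h1 ⊢
    rw [Matrix.conjTranspose_smul, h1]
    congr 1
    simp [Complex.star_def]
  have hsvv : star v ⬝ᵥ v = (γ : ℂ) := star_dot_self v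
  have hRpsd : R.PosSemidef := by
    refine Matrix.PosSemidef.of_dotProduct_mulVec_nonneg hRherm fun x => ?_
    set t : ℂ := star v ⬝ᵥ x with ht
    have f1 : star v ⬝ᵥ (P *ᵥ x) = t := by
      rw [Matrix.dotProduct_mulVec]
      have : star v ᵥ* P = star v := by
        nth_rewrite 1 [← hP.isHermitian.eq]
        rw [Matrix.vecMul_conjTranspose, star_star, heig]
      rw [this]
    have f2 : star x ⬝ᵥ (P *ᵥ v) = star t := by
      rw [heig]
      simp only [ht, dotProduct, Complex.star_def, map_sum, _root_.map_mul, Pi.star_apply,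
        Complex.conj_conj]
      exact Finset.sum_congr rfl fun l _ => by ring
    have f3 : star x ⬝ᵥ v = star t := by
      simp only [ht, dotProduct, Complex.star_def, map_sum, _root_.map_mul, Pi.star_apply,
        Complex.conj_conj]
      exact Finset.sum_congr rfl fun l _ => by ring
    set a : ℂ := ((γ⁻¹ : ℝ) : ℂ) * t with ha
    set w : Fin k → ℂ := x - a • v with hw
    have hL : star x ⬝ᵥ (R *ᵥ x)
        = star x ⬝ᵥ (P *ᵥ x) - ((γ⁻¹ : ℝ) : ℂ) * (t * star t) := by
      rw [hR, Matrix.sub_mulVec, dotProduct_sub, Matrix.smul_mulVec,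
        vecMulVec_mulVec', dotProduct_smul, dotProduct_smul, f3, ← ht]
      simp only [smul_eq_mul]
      try ring
    have hRt : star w ⬝ᵥ (P *ᵥ w)
        = star x ⬝ᵥ (P *ᵥ x) - ((γ⁻¹ : ℝ) : ℂ) * (t * star t) := by
      have hsw : star w = star x - star a • star v := by
        rw [hw]; ext l; simp [Complex.star_def]; try ring
      rw [hw, Matrix.mulVec_sub, Matrix.mulVec_smul, heig, ← hw, hsw,
        sub_dotProduct, dotProduct_sub, dotProduct_sub,
        smul_dotProduct, smul_dotProduct, dotProduct_smul, dotProduct_smul,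
        f1, f3, hsvv]
      have hsa : star a = ((γ⁻¹ : ℝ) : ℂ) * star t := by
        rw [ha, star_mul', Complex.star_def, Complex.conj_ofReal]
      rw [hsa, ha]
      simp only [smul_eq_mul, Complex.ofReal_inv]
      field_simp
      try ring
    rw [hL, ← hRt]
    exact hP.dotProduct_mulVec_nonneg w
  have hone : ((γ⁻¹ : ℝ) : ℂ) * (γ : ℂ) = 1 := by
    rw [Complex.ofReal_inv]
    exact inv_mul_cancel₀ hγ0
  have hRzero : R = 0 := by
    have h0 : ((R * 1).trace).re = 0 := by
      rw [Matrix.mul_one, hR, Matrix.trace_sub, Matrix.trace_smul, vecMulVec_trace,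
        hsvv, htr]
      simp only [smul_eq_mul, hone]
      simp
    have h1 := mul_eq_zero_of_trace_re hRpsd Matrix.PosSemidef.one h0
    rwa [Matrix.mul_one] at h1
  have := sub_eq_zero.mp (hR ▸ hRzero)
  rw [this]

lemma rank_smul_vecMulVec {v : Fin k → ℂ} (hv : v ≠ 0) {c : ℂ} (hc : c ≠ 0) :
    (c • vecMulVec v (star v)).rank = 1 := by
  set A := c • vecMulVec v (star v) with hA
  have hrange : LinearMap.range A.mulVecLin = Submodule.span ℂ {v} := by
    apply le_antisymm
    · rintro y ⟨x, rfl⟩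
      have : A.mulVecLin x = (c * (star v ⬝ᵥ x)) • v := by
        rw [Matrix.mulVecLin_apply, hA, Matrix.smul_mulVec, vecMulVec_mulVec',
          smul_smul]
      rw [this]
      exact Submodule.smul_mem _ _ (Submodule.mem_span_singleton_self v)
    · rw [Submodule.span_singleton_le_iff_mem]
      have hγ : star v ⬝ᵥ v ≠ 0 := by
        rw [star_dot_self]
        have : (0:ℝ) < ∑ l, Complex.normSq (v l) := by
          obtain ⟨i, hi⟩ : ∃ i, v i ≠ 0 := by
            by_contra h; push_neg at h; exact hv (funext h)
          exact Finset.sum_pos' (fun l _ => Complex.normSq_nonneg _)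
            ⟨i, Finset.mem_univ i, Complex.normSq_pos.mpr hi⟩
        exact_mod_cast this.ne'
      refine ⟨(c * (star v ⬝ᵥ v))⁻¹ • v, ?_⟩
      rw [Matrix.mulVecLin_apply, hA, Matrix.smul_mulVec, Matrix.mulVec_smul,
        vecMulVec_mulVec', smul_smul, smul_smul]
      have h1 : c * (c * (star v ⬝ᵥ v))⁻¹ * (star v ⬝ᵥ v) = 1 := by
        field_simp
      rw [h1, one_smul]
  rw [Matrix.rank, hrange, finrank_span_singleton hv]


end Helpers

/-- if `λmax(A) = d`, then for every nonzero effect `M j` the state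
ensemble contains a pure state (rank-one projection) `ρ i` which is the pure
eigenstate of `M j`, i.e. `M j = (tr M j) • ρ i`. -/

theorem ensemble_contains_eigenstates (d m n : ℕ) (hd : 0 < d) (hm : 0 < m) (hn : 0 < n)
    (A : Matrix (Fin m) (Fin n) ℝ) (hA : RowStochastic A)
    (ρ : Fin m → Matrix (Fin d) (Fin d) ℂ) (M : Fin n → Matrix (Fin d) (Fin d) ℂ)
    (hρ : ∀ i, (ρ i).PosSemidef ∧ (ρ i).trace = 1)
    (hM : ∀ j, (M j).PosSemidef) (hMsum : ∑ j, M j = 1)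
    (himpl : ∀ i j, A i j = ((ρ i * M j).trace).re)
    (hlmax : lmax A = d) :
    ∀ j, M j ≠ 0 → ∃ i, (ρ i).IsHermitian ∧ ρ i * ρ i = ρ i ∧ (ρ i).rank = 1 ∧
      M j = (M j).trace • ρ i := by
  intro j hMj
  have hmne : Nonempty (Fin m) := ⟨⟨0, hm⟩⟩
  set g : Fin n → ℝ := fun j => ((M j).trace).re with hg
  have hub : ∀ i j, A i j ≤ g j := by
    intro i j
    have h1 : ((1 - ρ i) * M j).trace = (M j).trace - (ρ i * M j).trace := by
      rw [Matrix.sub_mul, Matrix.one_mul, Matrix.trace_sub]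
    have h2 := trace_mul_psd_re_nonneg (one_sub_posSemidef (hρ i).1 (hρ i).2) (hM j)
    rw [h1] at h2
    rw [himpl i j]
    simp only [Complex.sub_re] at h2
    simp only [hg]
    linarith
  have hsupub : ∀ j, (⨆ i, A i j) ≤ g j := fun j => ciSup_le (fun i => hub i j)
  have hsumg : ∑ j', g j' = d := by
    have h1 : ∑ j', (M j').trace = (d : ℂ) := by
      rw [← Matrix.trace_sum, hMsum, Matrix.trace_one]
      simp
    have h2 : ∑ j', g j' = (∑ j', (M j').trace).re := by
      rw [Complex.re_sum]
    rw [h2, h1]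
    simp
  have heq : ∀ j', (⨆ i, A i j') = g j' := by
    have hsum2 : ∑ j', (g j' - (⨆ i, A i j')) = 0 := by
      rw [Finset.sum_sub_distrib, hsumg]
      unfold lmax at hlmax
      rw [hlmax]
      ring
    intro j'
    have := (Finset.sum_eq_zero_iff_of_nonneg
      (fun j' _ => sub_nonneg.mpr (hsupub j'))).mp hsum2 j' (Finset.mem_univ j')
    linarith
  obtain ⟨i0, hi0⟩ := Finite.exists_max (fun i => A i j)
  have hattain : A i0 j = g j := by
    have h1 : (⨆ i, A i j) = A i0 j :=
      le_antisymm (ciSup_le hi0) (le_ciSup (f := fun i => A i j) (Finite.bddAbove_range _) i0)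
    rw [← h1, heq j]
  have hz : (((1 - ρ i0) * M j).trace).re = 0 := by
    rw [Matrix.sub_mul, Matrix.one_mul, Matrix.trace_sub]
    have h3 := himpl i0 j
    simp only [Complex.sub_re]
    rw [← h3, hattain]
    simp [hg]
  have hmul := mul_eq_zero_of_trace_re (one_sub_posSemidef (hρ i0).1 (hρ i0).2) (hM j) hz
  rw [Matrix.sub_mul, Matrix.one_mul] at hmul
  have hρN : ρ i0 * M j = M j := (sub_eq_zero.mp hmul).symm
  obtain ⟨r0, c0, hnz⟩ : ∃ r c, M j r c ≠ 0 := by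
    by_contra h
    push_neg at h
    exact hMj (Matrix.ext fun r c => h r c)
  set v : Fin d → ℂ := fun r => M j r c0 with hvdef
  have hv : v ≠ 0 := fun h => hnz (congrFun h r0)
  have heig : ρ i0 *ᵥ v = v := by
    ext r
    have := congrFun (congrFun hρN r) c0
    simpa [Matrix.mulVec, Matrix.mul_apply, dotProduct, hvdef] using this
  have hps := pure_state (hρ i0).1 (hρ i0).2 v hv heig
  set γ : ℝ := ∑ l, Complex.normSq (v l) with hγdef
  have hγpos : 0 < γ := by
    obtain ⟨i, hi⟩ : ∃ i, v i ≠ 0 := by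
      by_contra h; push_neg at h; exact hv (funext h)
    exact Finset.sum_pos' (fun l _ => Complex.normSq_nonneg _)
      ⟨i, Finset.mem_univ i, Complex.normSq_pos.mpr hi⟩
  have hγ0 : (γ : ℂ) ≠ 0 := by exact_mod_cast hγpos.ne'
  have hc0 : ((γ⁻¹ : ℝ) : ℂ) ≠ 0 := by
    rw [Complex.ofReal_inv]
    exact inv_ne_zero hγ0
  have hone : ((γ⁻¹ : ℝ) : ℂ) * (γ : ℂ) = 1 := by
    rw [Complex.ofReal_inv]; exact inv_mul_cancel₀ hγ0
  refine ⟨i0, (hρ i0).1.isHermitian, ?_, ?_, ?_⟩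
  · rw [hps, Matrix.smul_mul, Matrix.mul_smul, vecMulVec_mul_vecMulVec, star_dot_self,
      ← hγdef, smul_smul, smul_smul]
    congr 1
    rw [mul_assoc, hone, mul_one]
  · rw [hps]
    exact rank_smul_vecMulVec hv hc0
  · have hNρ : M j * ρ i0 = M j := by
      have h4 := congrArg Matrix.conjTranspose hρN
      rw [Matrix.conjTranspose_mul, (hM j).isHermitian.eq, (hρ i0).1.isHermitian.eq] at h4
      exact h4
    have hNN : M j = ρ i0 * M j * ρ i0 := by rw [hρN, hNρ]
    set s : ℂ := (star v ᵥ* M j) ⬝ᵥ v with hs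
    have hmid : ρ i0 * M j * ρ i0
        = (((γ⁻¹:ℝ):ℂ) * ((γ⁻¹:ℝ):ℂ) * s) • vecMulVec v (star v) := by
      rw [hps, Matrix.smul_mul, Matrix.smul_mul, Matrix.mul_smul,
        vecMulVec_mul_mat, vecMulVec_mul_vecMulVec, ← hs, smul_smul, smul_smul]
      try congr 1
      try ring
    have htrN : (M j).trace = ((γ⁻¹:ℝ):ℂ) * s := by
      conv_lhs => rw [← hρN]
      rw [hps, Matrix.smul_mul, Matrix.trace_smul, vecMulVec_mul_mat, vecMulVec_trace,
        ← hs, smul_eq_mul]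
    have hNN2 : M j = (((γ⁻¹:ℝ):ℂ) * ((γ⁻¹:ℝ):ℂ) * s) • vecMulVec v (star v) :=
      hNN.trans hmid
    rw [htrN, hps, smul_smul, hNN2]
    congr 1
    ring
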